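/- Let m ≥ 2 be an integer with m ≡ 1 (mod 4), let f(x) = x^m on ℤ_2, and let t = ν_2(m − 1). For each integer l ≥ 0, each a ∈ {0, 1, …, 2^(t−1) − 1}, and each sign ε ∈ {1, −1}, set M_{l,a,ε} = ε + 2^(l+2) + 2^(l+3)·a + 2^(t+l+2)ℤ_2. Then the sets M_{l,a,ε} are pairwise disjoint clopen subsets of ℤ_2, each M_{l,a,ε} is a minimal component of f (f(M_{l,a,ε}) ⊆ M_{l,a,ε} and every forward orbit of f in M_{l,a,ε} is dense in M_{l,a,ε}), and the union of all the M_{l,a,ε} together with the fixed-point set {1, −1} equals the set of 2-adic units ℤ_2 \ 2ℤ_2. -/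

import Mathlib

open Filter Topology

namespace MonoZ2

lemma two_prime : Prime (2 : ℤ_[2]) := by
  have h := @PadicInt.prime_p 2 _
  simpa using h

/-- exact divisibility by `2^c` in `ℤ_[2]` -/
def E (c : ℕ) (z : ℤ_[2]) : Prop := (2:ℤ_[2])^c ∣ z ∧ ¬ (2:ℤ_[2])^(c+1) ∣ z

lemma coe_two : ((2:ℕ) : ℤ_[2]) = (2 : ℤ_[2]) := by norm_num

lemma dvd_int_iff (n : ℕ) (k : ℤ) : (2:ℤ_[2])^n ∣ ((k : ℤ) : ℤ_[2]) ↔ 2^n ∣ k := by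
  have h2 := @PadicInt.norm_int_le_pow_iff_dvd 2 _ k n
  have h3 := PadicInt.norm_le_pow_iff_mem_span_pow ((k:ℤ) : ℤ_[2]) n
  rw [Ideal.mem_span_singleton, coe_two] at h3
  constructor
  · intro h
    have := h2.mp (h3.mpr h)
    exact_mod_cast this
  · intro h
    exact h3.mp (h2.mpr (by exact_mod_cast h))

lemma dvd_nat_iff (n k : ℕ) : (2:ℤ_[2])^n ∣ (k : ℤ_[2]) ↔ 2^n ∣ k := by
  have h1 : ((k:ℤ) : ℤ_[2]) = (k : ℤ_[2]) := by push_cast; ring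
  rw [← h1, dvd_int_iff]
  exact_mod_cast Iff.rfl

lemma isUnit_of_not_two_dvd {u : ℤ_[2]} (h : ¬ (2:ℤ_[2]) ∣ u) : IsUnit u := by
  rw [PadicInt.isUnit_iff]
  have h1 : ¬ ‖u‖ < 1 := by
    rw [PadicInt.norm_lt_one_iff_dvd, coe_two]; exact h
  have := PadicInt.norm_le_one u
  linarith [lt_or_ge ‖u‖ 1 |>.resolve_left h1]

lemma not_two_dvd_of_isUnit {u : ℤ_[2]} (h : IsUnit u) : ¬ (2:ℤ_[2]) ∣ u := by
  intro hd
  exact two_prime.not_unit (isUnit_of_dvd_unit hd h)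

lemma E_unit_mul {c : ℕ} {u z : ℤ_[2]} (hu : IsUnit u) : E c (u * z) ↔ E c z := by
  unfold E
  rw [hu.dvd_mul_left, hu.dvd_mul_left]

lemma not_dvd_unit_part {a : ℕ} {u : ℤ_[2]} (h : ¬ (2:ℤ_[2])^(a+1) ∣ 2^a * u) :
    ¬ (2:ℤ_[2]) ∣ u := fun hd => h (by rw [pow_succ]; exact mul_dvd_mul_left _ hd)

lemma E_mul {a b : ℕ} {z w : ℤ_[2]} (hz : E a z) (hw : E b w) : E (a + b) (z * w) := by
  obtain ⟨u, rfl⟩ := hz.1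
  obtain ⟨v, rfl⟩ := hw.1
  have hu := not_dvd_unit_part hz.2
  have hv := not_dvd_unit_part hw.2
  constructor
  · rw [show (2:ℤ_[2])^a * u * (2^b * v) = 2^(a+b) * (u*v) by ring]
    exact dvd_mul_right _ _
  · intro hd
    rw [show (2:ℤ_[2])^a * u * (2^b * v) = 2^(a+b) * (u*v) by ring] at hd
    have : (2:ℤ_[2]) ∣ u * v := by
      have h2 : (2:ℤ_[2])^(a+b) ≠ 0 := pow_ne_zero _ two_prime.ne_zero
      rw [pow_succ] at hd
      exact (mul_dvd_mul_iff_left h2).mp hd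
    rcases two_prime.dvd_mul.mp this with h | h
    exacts [hu h, hv h]

lemma E_add_of_dvd {a : ℕ} {z w : ℤ_[2]} (hz : E a z) (hw : (2:ℤ_[2])^(a+1) ∣ w) :
    E a (z + w) := by
  refine ⟨dvd_add hz.1 ((pow_dvd_pow _ (Nat.le_succ a)).trans hw), fun h => hz.2 ?_⟩
  have := dvd_sub h hw
  simpa using this

lemma E_unique {a b : ℕ} {z : ℤ_[2]} (hz : E a z) (hz' : E b z) : a = b := by
  by_contra hne
  rcases Nat.lt_or_ge a b with h | h
  · exact hz.2 ((pow_dvd_pow _ h).trans hz'.1)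
  · have hba : b < a := lt_of_le_of_ne h (Ne.symm hne)
    exact hz'.2 ((pow_dvd_pow _ hba).trans hz.1)

lemma le_of_E_of_dvd {a N : ℕ} {z : ℤ_[2]} (hz : E a z) (h : (2:ℤ_[2])^N ∣ z) : N ≤ a := by
  by_contra hlt
  exact hz.2 ((pow_dvd_pow _ (by omega)).trans h)

lemma E_two : E 1 (2 : ℤ_[2]) := by
  refine ⟨dvd_refl _ |>.trans (by norm_num), ?_⟩
  intro h
  have : (2:ℤ_[2]) * 2 ∣ 2 * 1 := by simpa [pow_succ, mul_comm] using h
  have h2 : (2:ℤ_[2]) ∣ 1 := (mul_dvd_mul_iff_left (two_prime.ne_zero)).mp this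
  exact two_prime.not_unit (isUnit_of_dvd_one h2)

lemma not_two_dvd_odd {k : ℕ} (hk : Odd k) : ¬ (2:ℤ_[2]) ∣ (k : ℤ_[2]) := by
  intro h
  have : (2:ℤ_[2])^1 ∣ (k : ℤ_[2]) := by simpa using h
  rw [dvd_nat_iff] at this
  simp only [pow_one] at this
  exact (Nat.not_even_iff_odd.mpr hk) (even_iff_two_dvd.mpr this)

/-- LTE for p = 2 in ℤ_[2] : if 4 ∣ y - 1 exactly 2^c, then y^k - 1 is exactly 2^(c+ν₂ k). -/
lemma E_pow_sub_one {y : ℤ_[2]} {c : ℕ} (hc : 2 ≤ c) (hy : E c (y - 1)) :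
    ∀ k : ℕ, k ≠ 0 → E (c + padicValNat 2 k) (y ^ k - 1) := by
  intro k
  induction k using Nat.strong_induction_on with
  | _ k ih =>
    intro hk0
    rcases Nat.even_or_odd k with hke | hko
    · obtain ⟨j, hj⟩ := hke
      have hj' : k = 2 * j := by omega
      have hj0 : j ≠ 0 := by omega
      have hjk : j < k := by omega
      have IH := ih j hjk hj0
      have hsq : y ^ k - 1 = (y ^ j - 1) * (y ^ j + 1) := by
        rw [hj', mul_comm 2 j, pow_mul]; ring
      have h4 : (2:ℤ_[2])^2 ∣ y ^ j - 1 := (pow_dvd_pow _ (by omega)).trans IH.1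
      have hE1 : E 1 (y ^ j + 1) := by
        have : y ^ j + 1 = 2 + (y ^ j - 1) := by ring
        rw [this]
        exact E_add_of_dvd E_two (by simpa using h4)
      have := E_mul IH hE1
      rw [← hsq] at this
      have hval : c + padicValNat 2 k = c + padicValNat 2 j + 1 := by
        rw [hj', padicValNat.mul (by norm_num) hj0, padicValNat.self (by norm_num)]
        omega
      rw [hval]
      exact this
    · have hv : padicValNat 2 k = 0 := padicValNat.eq_zero_of_not_dvd (by
        rw [Nat.two_dvd_ne_zero]; exact Nat.odd_iff.mp hko)
      rw [hv, Nat.add_zero]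
      have hgeo : (∑ i ∈ Finset.range k, y ^ i) * (y - 1) = y ^ k - 1 := geom_sum_mul y k
      have hodd : ¬ (2:ℤ_[2]) ∣ (∑ i ∈ Finset.range k, y ^ i) := by
        intro h2
        have hsub : (2:ℤ_[2]) ∣ (∑ i ∈ Finset.range k, y ^ i) - (k : ℤ_[2]) := by
          have : (∑ i ∈ Finset.range k, y ^ i) - (k : ℤ_[2])
              = ∑ i ∈ Finset.range k, (y ^ i - 1) := by
            rw [Finset.sum_sub_distrib]
            simp
          rw [this]
          refine Finset.dvd_sum fun i _ => ?_
          have h1 : (y - 1) ∣ y ^ i - 1 := by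
            simpa using sub_dvd_pow_sub_pow y 1 i
          exact (dvd_trans (by
            simpa using (pow_dvd_pow (2:ℤ_[2]) (by omega : 1 ≤ c)).trans hy.1) h1)
        have hk2 : (2:ℤ_[2]) ∣ (k : ℤ_[2]) := by
          have := dvd_sub h2 hsub
          simpa using this
        exact not_two_dvd_odd hko hk2
      have hunit : IsUnit (∑ i ∈ Finset.range k, y ^ i) := isUnit_of_not_two_dvd hodd
      have := (E_unit_mul (z := y - 1) hunit).mpr hy
      rwa [hgeo] at this

lemma E_nat_iff {v k : ℕ} (hk : k ≠ 0) : E v (k : ℤ_[2]) ↔ padicValNat 2 k = v := by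
  unfold E
  rw [dvd_nat_iff, dvd_nat_iff, padicValNat_dvd_iff_le hk, padicValNat_dvd_iff_le hk]
  omega

lemma dvd_iff_norm_le {c : ℕ} {z : ℤ_[2]} :
    (2:ℤ_[2])^c ∣ z ↔ ‖z‖ ≤ (2:ℝ)^(-(c:ℤ)) := by
  rw [show ((2:ℝ)) = ((2:ℕ):ℝ) by norm_num]
  rw [PadicInt.norm_le_pow_iff_mem_span_pow, Ideal.mem_span_singleton, coe_two]

lemma isClopen_ball (b : ℤ_[2]) (c : ℕ) :
    IsClopen {x : ℤ_[2] | (2:ℤ_[2])^c ∣ x - b} := by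
  have : {x : ℤ_[2] | (2:ℤ_[2])^c ∣ x - b} = Metric.closedBall b ((2:ℝ)^(-(c:ℤ))) := by
    ext x
    simp only [Set.mem_setOf_eq, Metric.mem_closedBall, dist_eq_norm, dvd_iff_norm_le]
  rw [this]
  exact IsUltrametricDist.isClopen_closedBall b (by positivity)

lemma exists_E {z : ℤ_[2]} (hz : z ≠ 0) : ∃ c, E c z := by
  have hspec := PadicInt.unitCoeff_spec hz
  rw [coe_two] at hspec
  set v := z.valuation with hv
  set u := (PadicInt.unitCoeff hz : ℤ_[2]) with hu
  clear_value v u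
  refine ⟨v, ⟨u, by rw [hspec]; ring⟩, ?_⟩
  intro h
  rw [hspec, pow_succ] at h
  have hne : ((2:ℤ_[2]))^v ≠ 0 := pow_ne_zero _ two_prime.ne_zero
  have h2 : (2:ℤ_[2]) ∣ u := by
    have h' : (2:ℤ_[2]) * 2^v ∣ u * 2^v := by
      have e2 : u * 2^v = 2^v * u := by ring
      have e1 : (2:ℤ_[2]) * 2^v = 2^v * 2 := by ring
      rw [e2, e1]; rw [e2] at h; exact h
    exact (mul_dvd_mul_iff_right hne).mp h'
  exact not_two_dvd_of_isUnit (PadicInt.unitCoeff hz).isUnit (hu ▸ h2)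

lemma toZModPow_eq_iff (n : ℕ) (a b : ℤ_[2]) :
    PadicInt.toZModPow n a = PadicInt.toZModPow n b ↔ (2:ℤ_[2])^n ∣ a - b := by
  rw [← sub_eq_zero, ← map_sub, ← RingHom.mem_ker, PadicInt.ker_toZModPow,
    Ideal.mem_span_singleton, coe_two]

section core
variable {m : ℕ} (hm : 2 ≤ m) (hmod : m % 4 = 1) {t : ℕ} (ht : t = padicValNat 2 (m - 1))

include hm hmod ht

lemma ht2 : 2 ≤ t := by
  have h4 : 2^2 ∣ m - 1 := by omega
  have := (padicValNat_dvd_iff_le (by omega : m - 1 ≠ 0)).mp h4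
  omega

lemma E_m_sub_one : E t ((m : ℤ_[2]) - 1) := by
  have h1 : (m : ℤ_[2]) - 1 = ((m - 1 : ℕ) : ℤ_[2]) := by
    have : (1:ℕ) ≤ m := by omega
    push_cast [Nat.cast_sub this]; ring
  rw [h1, E_nat_iff (by omega : m - 1 ≠ 0)]
  omega

lemma val_m_pow_sub_one (n : ℕ) (hn : n ≠ 0) :
    padicValNat 2 (m ^ n - 1) = t + padicValNat 2 n := by
  have hE := E_pow_sub_one (ht2 hm hmod ht) (E_m_sub_one hm hmod ht) n hn
  have h1 : ((m:ℤ_[2]))^n - 1 = ((m^n - 1 : ℕ) : ℤ_[2]) := by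
    have : (1:ℕ) ≤ m^n := Nat.one_le_pow _ _ (by omega)
    push_cast [Nat.cast_sub this]; ring
  rw [h1] at hE
  have hne : m^n - 1 ≠ 0 := by
    have : 2^n ≤ m^n := Nat.pow_le_pow_left hm n
    have : 1 < 2^n := Nat.one_lt_two_pow hn
    omega
  exact (E_nat_iff hne).mp hE

/-- key orbit lemma : for x with exact ν(x-ε)=l+2, ν(x^(m^n) - x) = t+l+2+ν(n). -/
lemma E_orbit {ε x : ℤ_[2]} (hε : ε = 1 ∨ ε = -1) {l : ℕ} (hx : E (l+2) (x - ε))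
    (n : ℕ) (hn : n ≠ 0) : E (t + l + 2 + padicValNat 2 n) (x ^ (m^n) - x) := by
  have hε2 : ε * ε = 1 := by rcases hε with rfl | rfl <;> ring
  have hεu : IsUnit ε := by rcases hε with rfl | rfl; exacts [isUnit_one, isUnit_one.neg]
  set y := ε * x with hy
  have hy1 : y - 1 = ε * (x - ε) := by rw [hy]; rw [mul_sub, hε2]
  have hEy : E (l+2) (y - 1) := by rw [hy1, E_unit_mul hεu]; exact hx
  have hyu : IsUnit y := by
    apply isUnit_of_not_two_dvd
    intro h2
    have h41 : (2:ℤ_[2]) ∣ y - 1 := dvd_trans (by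
      simpa using pow_dvd_pow (2:ℤ_[2]) (by omega : 1 ≤ l+2)) hEy.1
    have : (2:ℤ_[2]) ∣ 1 := by simpa using dvd_sub h2 h41
    exact two_prime.not_unit (isUnit_of_dvd_one this)
  have hk0 : m ^ n ≠ 0 := by positivity
  have hk1 : m ^ n - 1 ≠ 0 := by
    have : 2^n ≤ m^n := Nat.pow_le_pow_left hm n
    have : 1 < 2^n := Nat.one_lt_two_pow hn
    omega
  have hmo : Odd m := Nat.odd_iff.mpr (by omega)
  have hodd : Odd (m ^ n) := hmo.pow
  have hEk : E (l + 2 + padicValNat 2 (m^n - 1)) (y ^ (m^n - 1) - 1) :=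
    E_pow_sub_one (by omega) hEy (m^n - 1) hk1
  rw [val_m_pow_sub_one hm hmod ht n hn] at hEk
  have hfac : y ^ (m^n) - y = y * (y ^ (m^n - 1) - 1) := by
    rw [mul_sub, mul_one, ← pow_succ']
    congr 2
    omega
  have hEyn : E (l + 2 + (t + padicValNat 2 n)) (y ^ (m^n) - y) := by
    rw [hfac, E_unit_mul hyu]; exact hEk
  have hxy : x ^ (m^n) - x = ε * (y ^ (m^n) - y) := by
    have hx' : x = ε * y := by rw [hy, ← mul_assoc, hε2, one_mul]
    have hεk : ε ^ (m^n) = ε := by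
      rcases hε with rfl | rfl
      · simp
      · exact Odd.neg_one_pow hodd
    rw [hx', mul_pow, hεk, mul_sub]
  rw [hxy]
  have := (E_unit_mul (z := y ^ (m^n) - y) hεu).mpr hEyn
  have harr : l + 2 + (t + padicValNat 2 n) = t + l + 2 + padicValNat 2 n := by omega
  rw [harr] at this
  exact this

end core


lemma E_pow_two (c : ℕ) : E c ((2:ℤ_[2])^c) := by
  refine ⟨dvd_refl _, fun h => ?_⟩
  obtain ⟨w, hw⟩ := h
  rw [pow_succ, mul_assoc] at hw
  have hne : ((2:ℤ_[2]))^c ≠ 0 := pow_ne_zero _ two_prime.ne_zero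
  have h1 : (1:ℤ_[2]) = 2 * w :=
    mul_left_cancel₀ hne (by rw [mul_one]; exact hw)
  exact two_prime.not_unit (isUnit_of_dvd_one ⟨w, h1⟩)

lemma odd_cast_unit (a : ℕ) : IsUnit (1 + 2*(a:ℤ_[2])) := by
  apply isUnit_of_not_two_dvd
  have hc : (1 + 2*(a:ℤ_[2])) = ((1 + 2*a : ℕ) : ℤ_[2]) := by push_cast; ring
  rw [hc]
  exact not_two_dvd_odd ⟨a, by ring⟩

lemma E_center (l a : ℕ) (ε : ℤ_[2]) :
    E (l+2) ((ε + 2^(l+2) + 2^(l+3)*(a:ℤ_[2])) - ε) := by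
  have h1 : (ε + 2^(l+2) + 2^(l+3)*(a:ℤ_[2])) - ε
      = (1 + 2*(a:ℤ_[2])) * (2:ℤ_[2])^(l+2) := by ring
  rw [h1, E_unit_mul (odd_cast_unit a)]
  exact E_pow_two _

/-- membership in M gives exact valuation of x - ε -/
lemma E_of_mem {l a t : ℕ} (ht : 1 ≤ t) {ε x : ℤ_[2]}
    (hx : (2:ℤ_[2])^(t+l+2) ∣ x - (ε + 2^(l+2) + 2^(l+3)*(a:ℤ_[2]))) :
    E (l+2) (x - ε) := by
  set b := ε + 2^(l+2) + 2^(l+3)*(a:ℤ_[2]) with hb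
  have h1 : x - ε = (b - ε) + (x - b) := by ring
  rw [h1]
  exact E_add_of_dvd (E_center l a ε) ((pow_dvd_pow _ (by omega : l+3 ≤ t+l+2)).trans hx)

section density
variable {m : ℕ} (hm : 2 ≤ m) (hmod : m % 4 = 1) {t : ℕ} (ht : t = padicValNat 2 (m - 1))

include hm hmod ht

/-- divisibility of orbit differences -/
lemma orbit_dvd {ε x : ℤ_[2]} (hε : ε = 1 ∨ ε = -1) {l : ℕ} (hx : E (l+2) (x - ε))
    (n : ℕ) : (2:ℤ_[2])^(t+l+2) ∣ x ^ (m^n) - x := by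
  rcases Nat.eq_zero_or_pos n with rfl | hn
  · simp
  · exact (pow_dvd_pow _ (by omega)).trans (E_orbit hm hmod ht hε hx n (by omega)).1

lemma E_of_mem_orbit {ε x : ℤ_[2]} (hε : ε = 1 ∨ ε = -1) {l : ℕ} (hx : E (l+2) (x - ε))
    (n : ℕ) : E (l+2) (x ^ (m^n) - ε) := by
  have h1 : x ^ (m^n) - ε = (x - ε) + (x ^ (m^n) - x) := by ring
  rw [h1]
  have h2 := ht2 hm hmod ht
  exact E_add_of_dvd hx ((pow_dvd_pow _ (by omega : l+3 ≤ t+l+2)).trans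
    (orbit_dvd hm hmod ht hε hx n))

lemma orbit_diff {ε x : ℤ_[2]} (hε : ε = 1 ∨ ε = -1) {l : ℕ} (hx : E (l+2) (x - ε))
    {n n' : ℕ} (h : n < n') :
    E (t + l + 2 + padicValNat 2 (n' - n)) (x ^ (m^n') - x ^ (m^n)) := by
  have hxn := E_of_mem_orbit hm hmod ht hε hx n
  have hkey := E_orbit hm hmod ht hε hxn (n' - n) (by omega)
  have hpow : (x ^ (m^n)) ^ (m ^ (n' - n)) = x ^ (m^n') := by
    rw [← pow_mul, ← pow_add, Nat.add_sub_cancel' h.le]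
  rwa [hpow] at hkey

/-- the core density statement -/
lemma density_key {ε x z : ℤ_[2]} (hε : ε = 1 ∨ ε = -1) {l : ℕ} (hx : E (l+2) (x - ε))
    (hz : (2:ℤ_[2])^(t+l+2) ∣ z - x) (N : ℕ) (hN : t+l+2 ≤ N) :
    ∃ n : ℕ, (2:ℤ_[2])^N ∣ x ^ m ^ n - z := by
  set c := t + l + 2 with hc
  have hq : ∀ n : ℕ, ∃ w, x ^ (m^n) - x = 2^c * w := fun n => orbit_dvd hm hmod ht hε hx n
  choose q hq' using hq
  haveI : NeZero (2^(N-c)) := ⟨by positivity⟩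
  set K := 2^(N-c) with hK
  have hNc : c + (N - c) = N := by omega
  have hpowN : (2:ℤ_[2])^N = 2^c * 2^(N-c) := by rw [← pow_add, hNc]
  set g : Fin K → ZMod (2^(N-c)) := fun i => PadicInt.toZModPow (N-c) (q i) with hg
  have hinj : Function.Injective g := by
    have key : ∀ i j : Fin K, (i:ℕ) < (j:ℕ) → g i ≠ g j := by
      intro i j hij hgij
      rw [hg] at hgij
      simp only at hgij
      rw [toZModPow_eq_iff] at hgij
      have hdvd : (2:ℤ_[2])^N ∣ x ^ (m^(j:ℕ)) - x ^ (m^(i:ℕ)) := by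
        have : x ^ (m^(j:ℕ)) - x ^ (m^(i:ℕ)) = 2^c * (q j - q i) := by
          rw [mul_sub, ← hq', ← hq']; ring
        rw [this, hpowN]
        exact mul_dvd_mul_left _ (dvd_sub_comm.mp hgij)
      have hE := orbit_diff hm hmod ht hε hx hij
      have hle := le_of_E_of_dvd hE hdvd
      have hvd : 2^(N-c) ∣ (j:ℕ) - (i:ℕ) :=
        (padicValNat_dvd_iff_le (by omega)).mpr (by omega)
      have := Nat.le_of_dvd (by omega) hvd
      have hjK : (j:ℕ) < K := j.isLt
      omega
    intro i j hgij
    by_contra hne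
    rcases Nat.lt_or_ge (i:ℕ) (j:ℕ) with h | h
    · exact key i j h hgij
    · have : (j:ℕ) < (i:ℕ) := by
        rcases Nat.lt_or_ge (j:ℕ) (i:ℕ) with h' | h'
        · exact h'
        · exact absurd (Fin.ext (by omega)) hne
      exact key j i this hgij.symm
  have hbij : Function.Bijective g := by
    rw [Fintype.bijective_iff_injective_and_card]
    refine ⟨hinj, ?_⟩
    rw [Fintype.card_fin, ZMod.card]
  obtain ⟨r, hr⟩ := hz
  obtain ⟨i, hi⟩ := hbij.2 (PadicInt.toZModPow (N-c) r)
  refine ⟨i, ?_⟩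
  rw [hg] at hi
  simp only at hi
  rw [toZModPow_eq_iff] at hi
  have : x ^ (m^(i:ℕ)) - z = 2^c * (q i - r) := by
    rw [mul_sub, ← hq', ← hr]; ring
  rw [this, hpowN]
  exact mul_dvd_mul_left _ hi

end density


lemma two_dvd_mul_sub_one (x : ℤ_[2]) : (2:ℤ_[2]) ∣ x * (x - 1) := by
  have h : PadicInt.toZModPow 1 (x * (x - 1)) = PadicInt.toZModPow 1 0 := by
    rw [map_mul, map_sub, map_one, map_zero]
    have : ∀ w : ZMod (2^1), w * (w - 1) = 0 := by decide
    exact this _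
  have := (toZModPow_eq_iff 1 _ _).mp h
  simpa using this

lemma two_dvd_or (x : ℤ_[2]) : (2:ℤ_[2]) ∣ x ∨ (2:ℤ_[2]) ∣ x - 1 :=
  two_prime.dvd_mul.mp (two_dvd_mul_sub_one x)

/-- every odd 2-adic integer is ≡ ±1 mod 4 -/
lemma four_dvd_choice {x : ℤ_[2]} (hx : ¬ (2:ℤ_[2]) ∣ x) :
    ∃ ε : ℤ_[2], (ε = 1 ∨ ε = -1) ∧ (2:ℤ_[2])^2 ∣ x - ε := by
  rcases two_dvd_or x with h | h
  · exact absurd h hx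
  obtain ⟨u, hu⟩ := h
  rcases two_dvd_or u with h2 | h2
  · refine ⟨1, Or.inl rfl, ?_⟩
    obtain ⟨v, hv⟩ := h2
    exact ⟨v, by rw [show x - 1 = 2*u from hu, hv]; ring⟩
  · refine ⟨-1, Or.inr rfl, ?_⟩
    obtain ⟨v, hv⟩ := h2
    refine ⟨v + 1, ?_⟩
    have : x - -1 = 2*u + 2 := by rw [← hu]; ring
    rw [this, show u = 2*v + 1 by rw [← hv]; ring]
    ring

end MonoZ2

open MonoZ2 in
/-- Minimal decomposition for `x ↦ x^m` on `ℤ_2` with `m ≡ 1 (mod 4)`: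
the sets `M_{l,a,ε} = ε + 2^(l+2) + 2^(l+3)a + 2^(t+l+2)ℤ_2` are pairwise disjoint
clopen minimal components, and together with `{1, -1}` they cover exactly the 2-adic
units. -/
theorem monomial_Z2_one_mod_four_decomposition (m : ℕ) (hm : 2 ≤ m) (hmod : m % 4 = 1)
    (t : ℕ) (ht : t = padicValNat 2 (m - 1))
    (M : ℕ → ℕ → ℤ_[2] → Set ℤ_[2])
    (hM : ∀ l a ε, M l a ε =
      {x : ℤ_[2] | (2 : ℤ_[2]) ^ (t + l + 2) ∣
        x - (ε + 2 ^ (l + 2) + 2 ^ (l + 3) * (a : ℤ_[2]))}) :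
    (∀ l a (ε : ℤ_[2]) l' a' (ε' : ℤ_[2]),
      a < 2 ^ (t - 1) → a' < 2 ^ (t - 1) → (ε = 1 ∨ ε = -1) → (ε' = 1 ∨ ε' = -1) →
      (l, a, ε) ≠ (l', a', ε') → Disjoint (M l a ε) (M l' a' ε')) ∧
    (∀ l a (ε : ℤ_[2]), a < 2 ^ (t - 1) → (ε = 1 ∨ ε = -1) →
      IsClopen (M l a ε) ∧
      (∀ x ∈ M l a ε, x ^ m ∈ M l a ε) ∧
      (∀ x ∈ M l a ε, M l a ε ⊆ closure (Set.range fun n : ℕ => x ^ m ^ n))) ∧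
    ((⋃ l : ℕ, ⋃ a ∈ Finset.range (2 ^ (t - 1)), ⋃ ε ∈ ({1, -1} : Set ℤ_[2]), M l a ε)
        ∪ {1, -1} = {x : ℤ_[2] | ¬ (2 : ℤ_[2]) ∣ x}) := by
  have ht2' : 2 ≤ t := ht2 hm hmod ht
  refine ⟨?_, ?_, ?_⟩
  · -- disjointness
    intro l a ε l' a' ε' ha ha' hε hε' hne
    rw [Set.disjoint_left]
    intro x hxM hxM'
    rw [hM] at hxM hxM'
    simp only [Set.mem_setOf_eq] at hxM hxM'
    have hE1 : E (l+2) (x - ε) := E_of_mem (by omega) hxM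
    have hE2 : E (l'+2) (x - ε') := E_of_mem (by omega) hxM'
    by_cases hee : ε = ε'
    · subst hee
      have hll : l = l' := by have := E_unique hE1 hE2; omega
      subst hll
      have hd : (2:ℤ_[2])^(t+l+2) ∣ (2:ℤ_[2])^(l+3) * ((a':ℤ_[2]) - a) := by
        have h1 := dvd_sub hxM hxM'
        have h2 : x - (ε + 2^(l+2) + 2^(l+3)*(a:ℤ_[2]))
            - (x - (ε + 2^(l+2) + 2^(l+3)*(a':ℤ_[2])))
            = 2^(l+3) * ((a':ℤ_[2]) - a) := by ring
        rwa [h2] at h1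
      have hsplit : (2:ℤ_[2])^(t+l+2) = 2^(l+3) * 2^(t-1) := by
        rw [← pow_add]; congr 1; omega
      rw [hsplit] at hd
      have h2 : (2:ℤ_[2])^(t-1) ∣ ((a':ℤ_[2]) - (a:ℤ_[2])) :=
        (mul_dvd_mul_iff_left (pow_ne_zero _ two_prime.ne_zero)).mp hd
      have key : ∀ (a₁ a₂ : ℕ), a₁ ≤ a₂ → a₂ < 2^(t-1) →
          (2:ℤ_[2])^(t-1) ∣ ((a₂:ℤ_[2]) - (a₁:ℤ_[2])) → a₁ = a₂ := by
        intro a₁ a₂ h1 hlt hdd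
        have hc : ((a₂ - a₁ : ℕ) : ℤ_[2]) = (a₂:ℤ_[2]) - (a₁:ℤ_[2]) := by
          push_cast [Nat.cast_sub h1]; ring
        rw [← hc, dvd_nat_iff] at hdd
        have := Nat.eq_zero_of_dvd_of_lt hdd (by omega)
        omega
      have haa : a = a' := by
        rcases le_total a a' with hle | hle
        · exact key a a' hle ha' h2
        · exact (key a' a hle ha (dvd_sub_comm.mp h2)).symm
      exact hne (by rw [haa])
    · -- different signs : 4 divides ε - ε' = ±2, contradiction
      have h41 : (2:ℤ_[2])^2 ∣ x - ε := (pow_dvd_pow _ (by omega)).trans hE1.1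
      have h42 : (2:ℤ_[2])^2 ∣ x - ε' := (pow_dvd_pow _ (by omega)).trans hE2.1
      have h4 : (2:ℤ_[2])^2 ∣ ε - ε' := by
        have := dvd_sub h42 h41
        simpa using this
      have h4two : (2:ℤ_[2])^2 ∣ 2 := by
        rcases hε with rfl | rfl <;> rcases hε' with rfl | rfl
        · exact absurd rfl hee
        · have : (1:ℤ_[2]) - -1 = 2 := by ring
          rwa [this] at h4
        · have h4' := dvd_neg.mpr h4
          have : -((-1:ℤ_[2]) - 1) = 2 := by ring
          rwa [this] at h4'
        · exact absurd rfl hee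
      exact E_two.2 (by simpa using h4two)
  · -- clopen, invariance, minimality
    intro l a ε ha hε
    refine ⟨?_, ?_, ?_⟩
    · rw [hM]
      exact isClopen_ball _ _
    · intro x hx
      rw [hM] at hx ⊢
      simp only [Set.mem_setOf_eq] at hx ⊢
      have hE := E_of_mem (by omega : 1 ≤ t) hx
      have horb := orbit_dvd hm hmod ht hε hE 1
      rw [pow_one] at horb
      have h1 : x ^ m - (ε + 2^(l+2) + 2^(l+3)*(a:ℤ_[2]))
          = (x ^ m - x) + (x - (ε + 2^(l+2) + 2^(l+3)*(a:ℤ_[2]))) := by ring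
      rw [h1]
      exact dvd_add horb hx
    · intro x hx z hz
      rw [hM] at hx hz
      simp only [Set.mem_setOf_eq] at hx hz
      have hE := E_of_mem (by omega : 1 ≤ t) hx
      rw [Metric.mem_closure_iff]
      intro δ hδ
      obtain ⟨N₀, hN₀⟩ := exists_pow_lt_of_lt_one hδ (by norm_num : (1/2:ℝ) < 1)
      set N := max N₀ (t+l+2) with hN
      have hzx : (2:ℤ_[2])^(t+l+2) ∣ z - x := by
        have := dvd_sub hz hx
        simpa using this
      obtain ⟨n, hn⟩ := density_key hm hmod ht hε hE hzx N (le_max_right _ _)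
      refine ⟨x ^ m ^ n, ⟨n, rfl⟩, ?_⟩
      have hnorm : ‖z - x ^ m ^ n‖ ≤ (2:ℝ)^(-(N:ℤ)) := by
        rw [← dvd_iff_norm_le]
        exact dvd_sub_comm.mp hn
      have hlt : ((2:ℝ))^(-(N:ℤ)) < δ := by
        calc ((2:ℝ))^(-(N:ℤ)) = (1/2)^(N:ℕ) := by
              rw [zpow_neg, one_div, inv_pow, zpow_natCast]
          _ ≤ (1/2)^N₀ := by
              apply pow_le_pow_of_le_one (by norm_num) (by norm_num)
              exact le_max_left _ _
          _ < δ := hN₀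
      rw [dist_eq_norm]
      exact lt_of_le_of_lt hnorm hlt
  · -- the covering
    ext x
    simp only [Set.mem_union, Set.mem_iUnion, Set.mem_setOf_eq, Finset.mem_range,
      Set.mem_insert_iff, Set.mem_singleton_iff]
    constructor
    · rintro (⟨l, a, ⟨ha, ε, ⟨hε, hxM⟩⟩⟩ | hx1)
      · rw [hM] at hxM
        simp only [Set.mem_setOf_eq] at hxM
        intro h2x
        have h2b : (2:ℤ_[2]) ∣ ε + 2^(l+2) + 2^(l+3)*(a:ℤ_[2]) := by
          have h1 : (2:ℤ_[2]) ∣ x - (ε + 2^(l+2) + 2^(l+3)*(a:ℤ_[2])) :=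
            dvd_trans (by simpa using pow_dvd_pow (2:ℤ_[2]) (by omega : 1 ≤ t+l+2)) hxM
          have := dvd_sub h2x h1
          simpa using this
        have h2ε : (2:ℤ_[2]) ∣ ε := by
          have h22 : (2:ℤ_[2]) ∣ (2:ℤ_[2])^(l+2) + 2^(l+3)*(a:ℤ_[2]) :=
            dvd_add (dvd_pow_self 2 (by omega)) ((dvd_pow_self 2 (by omega)).mul_right _)
          have := dvd_sub h2b h22
          simpa using this
        have : (2:ℤ_[2]) ∣ 1 := by
          rcases hε with rfl | rfl
          · exact h2ε
          · simpa using dvd_neg.mpr h2ε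
        exact two_prime.not_unit (isUnit_of_dvd_one this)
      · intro h2x
        have : (2:ℤ_[2]) ∣ 1 := by
          rcases hx1 with rfl | rfl
          · exact h2x
          · simpa using dvd_neg.mpr h2x
        exact two_prime.not_unit (isUnit_of_dvd_one this)
    · intro hx
      by_cases hx1 : x = 1 ∨ x = -1
      · exact Or.inr hx1
      push_neg at hx1
      left
      obtain ⟨ε, hε, hε4⟩ := four_dvd_choice hx
      have hxe : x - ε ≠ 0 := by
        rcases hε with rfl | rfl
        · exact sub_ne_zero_of_ne hx1.1
        · exact sub_ne_zero_of_ne hx1.2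
      obtain ⟨v, hv⟩ := exists_E hxe
      have hv2 : 2 ≤ v := le_of_E_of_dvd hv hε4
      set l := v - 2 with hl
      have hvl : v = l + 2 := by omega
      rw [hvl] at hv
      obtain ⟨u, hu⟩ := hv.1
      have hu2 : ¬ (2:ℤ_[2]) ∣ u := not_dvd_unit_part (by rw [← hu]; exact hv.2)
      haveI : NeZero (2^t) := ⟨by positivity⟩
      set w := (PadicInt.toZModPow t u).val with hw
      have hwlt : w < 2^t := ZMod.val_lt _
      have hwu : (2:ℤ_[2])^t ∣ u - (w:ℤ_[2]) := by
        rw [← toZModPow_eq_iff]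
        have : ((w:ℕ) : ZMod (2^t)) = PadicInt.toZModPow t u :=
          ZMod.natCast_rightInverse (PadicInt.toZModPow t u)
        rw [map_natCast, this]
      have hwodd : ¬ 2 ∣ w := by
        intro h2w
        apply hu2
        have h1 : (2:ℤ_[2]) ∣ (w:ℤ_[2]) := by
          have := (dvd_nat_iff 1 w).mpr (by simpa using h2w)
          simpa using this
        have h2 : (2:ℤ_[2]) ∣ u - (w:ℤ_[2]) :=
          dvd_trans (by simpa using pow_dvd_pow (2:ℤ_[2]) (by omega : 1 ≤ t)) hwu
        have := dvd_add h2 h1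
        simpa using this
      set a := (w - 1)/2 with ha
      have hwa : w = 2*a + 1 := by omega
      have hapow : 2^t = 2 * 2^(t-1) := by
        rw [← pow_succ']
        congr 1
        omega
      have halt : a < 2^(t-1) := by omega
      refine ⟨l, a, ⟨halt, ε, ⟨hε, ?_⟩⟩⟩
      rw [hM]
      simp only [Set.mem_setOf_eq]
      have hcast : (w : ℤ_[2]) = 1 + 2*(a:ℤ_[2]) := by
        rw [hwa]; push_cast; ring
      have hdiff : x - (ε + 2^(l+2) + 2^(l+3)*(a:ℤ_[2]))
          = 2^(l+2) * (u - (w:ℤ_[2])) := by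
        rw [hcast]
        have hx' : x = ε + 2^(l+2) * u := by rw [← hu]; ring
        rw [hx']
        ring
      rw [hdiff, show (2:ℤ_[2])^(t+l+2) = 2^(l+2) * 2^t by rw [← pow_add]; congr 1; omega]
      exact mul_dvd_mul_left _ hwu
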